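/- Let T be a continuous linear operator on X. Assume that for every x ∈ X and every ε > 0, there exist a periodic point z of T and an integer n ≥ 1 such that ‖z‖ < ε and ‖Tⁿz − x‖ < ε. Then T is chaotic. -/

import Mathlib

lemma crt_aux (m₁ m₂ n₁ n₂ : ℕ) (h₁ : 1 ≤ m₁) (h₂ : 1 ≤ m₂) :
    ∃ N s : ℕ, s < m₁ ∧ (∃ a, N + n₁ = a * m₁) ∧ (∃ b, N + s = n₂ + b * m₂) := by
  set g := Nat.gcd m₁ m₂ with hg
  have hgpos : 0 < g := Nat.gcd_pos_of_pos_left _ (by omega)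
  set s := (n₁ + n₂) % g with hs
  have hslt : s < g := Nat.mod_lt _ hgpos
  have hgm₁ : g ∣ m₁ := Nat.gcd_dvd_left _ _
  have hgm₂ : g ∣ m₂ := Nat.gcd_dvd_right _ _
  have hsm₁ : s < m₁ := lt_of_lt_of_le hslt (Nat.le_of_dvd (by omega) hgm₁)
  have hdvd : g ∣ (n₁ + n₂) - s := Nat.dvd_sub_mod _
  have hsle : s ≤ n₁ + n₂ := Nat.mod_le _ _
  set a' := n₁ * (m₁ - 1) with ha'
  set b' := n₂ + s * (m₂ - 1) with hb'
  have hab : a' ≡ b' [MOD g] := by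
    rw [Nat.modEq_iff_dvd]
    obtain ⟨c, hc⟩ := hdvd
    obtain ⟨d₁, hd₁⟩ := hgm₁
    obtain ⟨d₂, hd₂⟩ := hgm₂
    have hc' : (n₁ : ℤ) + n₂ - s = g * c := by
      have := congrArg (Nat.cast : ℕ → ℤ) hc
      push_cast [Nat.cast_sub hsle] at this ⊢
      linarith
    refine ⟨c + s * d₂ - n₁ * d₁, ?_⟩
    have e1 : (b' : ℤ) - a' = ((n₁ : ℤ) + n₂ - s) + s * m₂ - n₁ * m₁ := by
      rw [ha', hb']
      push_cast [Nat.cast_sub h₁, Nat.cast_sub h₂]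
      ring
    rw [e1, hc']
    have : (m₁ : ℤ) = g * d₁ := by exact_mod_cast congrArg (Nat.cast : ℕ → ℤ) hd₁
    have h2 : (m₂ : ℤ) = g * d₂ := by exact_mod_cast congrArg (Nat.cast : ℕ → ℤ) hd₂
    rw [this, h2]; ring
  obtain ⟨r, hr₁, hr₂⟩ := Nat.chineseRemainder' hab
  set N := r + m₁ * m₂ * n₂ with hN
  refine ⟨N, s, hsm₁, ?_, ?_⟩
  · obtain ⟨c, hc⟩ := Nat.modEq_iff_dvd.mp hr₁
    have key : ((N : ℤ) + n₁) = m₁ * (n₁ - c + m₂ * n₂) := by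
      have ha'' : (a' : ℤ) = n₁ * m₁ - n₁ := by
        rw [ha']; push_cast [Nat.cast_sub h₁]; ring
      have : (a' : ℤ) - r = m₁ * c := hc
      rw [hN]; push_cast
      linarith [this, ha''.symm]
    have : (m₁ : ℤ) ∣ (N : ℤ) + n₁ := ⟨_, key⟩
    have hnat : m₁ ∣ N + n₁ := by exact_mod_cast this
    obtain ⟨a, ha⟩ := hnat
    exact ⟨a, by rw [ha, Nat.mul_comm]⟩
  · obtain ⟨c, hc⟩ := Nat.modEq_iff_dvd.mp hr₂
    have key : ((N : ℤ) + s - n₂) = m₂ * (s - c + m₁ * n₂) := by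
      have hb'' : (b' : ℤ) = n₂ + s * m₂ - s := by
        rw [hb']; push_cast [Nat.cast_sub h₂]; ring
      have : (b' : ℤ) - r = m₂ * c := hc
      rw [hN]; push_cast
      linarith [this, hb''.symm]
    have hle : n₂ ≤ N + s := by
      have : n₂ ≤ m₁ * m₂ * n₂ := Nat.le_mul_of_pos_left _ (by positivity)
      omega
    have : (m₂ : ℤ) ∣ ((N + s - n₂ : ℕ) : ℤ) := by
      rw [Nat.cast_sub hle]
      exact ⟨((s : ℤ) - c + m₁ * n₂), by push_cast; linarith [key]⟩
    have hnat : m₂ ∣ N + s - n₂ := by exact_mod_cast this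
    obtain ⟨b, hb⟩ := hnat
    refine ⟨b, ?_⟩
    rw [Nat.mul_comm] at hb
    omega

section Aux

variable {𝕜 : Type*} [RCLike 𝕜] {X : Type*} [NormedAddCommGroup X] [NormedSpace 𝕜 X]

lemma aux_periodic_mul (T : X →L[𝕜] X) {m : ℕ} {z : X} (hz : (T ^ m) z = z) (k : ℕ) :
    (T ^ (k * m)) z = z := by
  induction k with
  | zero => simp
  | succ k ih =>
    have h1 : (k + 1) * m = k * m + m := by ring
    rw [h1, pow_add, ContinuousLinearMap.mul_apply, hz, ih]

lemma aux_pow_norm_le (T : X →L[𝕜] X) (s : ℕ) : ‖T ^ s‖ ≤ (max 1 ‖T‖) ^ s := by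
  induction s with
  | zero => simp; exact ContinuousLinearMap.norm_id_le
  | succ s ih =>
    rw [pow_succ, pow_succ]
    calc ‖T ^ s * T‖ ≤ ‖T ^ s‖ * ‖T‖ := norm_mul_le _ _
    _ ≤ (max 1 ‖T‖) ^ s * max 1 ‖T‖ :=
        mul_le_mul ih (le_max_right _ _) (norm_nonneg _) (by positivity)

lemma aux_trans (T : X →L[𝕜] X)
    (h : ∀ (x : X) (ε : ℝ), 0 < ε →
      ∃ (z : X) (n : ℕ), 1 ≤ n ∧ (∃ m : ℕ, 1 ≤ m ∧ (T ^ m) z = z) ∧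
        ‖z‖ < ε ∧ ‖(T ^ n) z - x‖ < ε) :
    ∀ (u v : X) (ε : ℝ), 0 < ε → ∃ (w : X) (N : ℕ), ‖w - u‖ < ε ∧ ‖(T ^ N) w - v‖ < ε := by
  intro u v ε hε
  obtain ⟨z₁, n₁, hn₁, ⟨m₁, hm₁, hz₁⟩, hz₁small, hz₁close⟩ := h u (ε / 4) (by positivity)
  set M := max 1 ‖T‖ with hM
  have hM1 : (1 : ℝ) ≤ M := le_max_left _ _
  set C := M ^ m₁ with hC
  have hC1 : (1 : ℝ) ≤ C := one_le_pow₀ hM1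
  have hCpos : (0 : ℝ) < C := lt_of_lt_of_le one_pos hC1
  have hδ : (0 : ℝ) < ε / (4 * C) := by positivity
  obtain ⟨z₂, n₂, hn₂, ⟨m₂, hm₂, hz₂⟩, hz₂small, hz₂close⟩ := h v (ε / (4 * C)) hδ
  obtain ⟨N, s, hsm, ⟨a, haN⟩, ⟨b, hbN⟩⟩ := crt_aux m₁ m₂ n₁ n₂ hm₁ hm₂
  have hTs : ‖(T ^ s) z₂‖ < ε / 4 := by
    calc ‖(T ^ s) z₂‖ ≤ ‖T ^ s‖ * ‖z₂‖ := ContinuousLinearMap.le_opNorm _ _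
    _ ≤ C * ‖z₂‖ := by
        apply mul_le_mul_of_nonneg_right _ (norm_nonneg _)
        exact le_trans (aux_pow_norm_le T s) (pow_le_pow_right₀ hM1 hsm.le)
    _ < C * (ε / (4 * C)) := mul_lt_mul_of_pos_left hz₂small hCpos
    _ = ε / 4 := by field_simp
  refine ⟨(T ^ n₁) z₁ + (T ^ s) z₂, N, ?_, ?_⟩
  · calc ‖(T ^ n₁) z₁ + (T ^ s) z₂ - u‖ = ‖((T ^ n₁) z₁ - u) + (T ^ s) z₂‖ := by abel_nf
    _ ≤ ‖(T ^ n₁) z₁ - u‖ + ‖(T ^ s) z₂‖ := norm_add_le _ _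
    _ < ε / 4 + ε / 4 := add_lt_add hz₁close hTs
    _ < ε := by linarith
  · have e1 : (T ^ N) ((T ^ n₁) z₁ + (T ^ s) z₂) = z₁ + (T ^ n₂) z₂ := by
      rw [map_add]
      congr 1
      · rw [← ContinuousLinearMap.mul_apply, ← pow_add, haN]
        exact aux_periodic_mul T hz₁ a
      · rw [← ContinuousLinearMap.mul_apply, ← pow_add, hbN, pow_add,
          ContinuousLinearMap.mul_apply, aux_periodic_mul T hz₂ b]
    rw [e1]
    have hδle : ε / (4 * C) ≤ ε / 4 := by
      apply div_le_div_of_nonneg_left hε.le (by norm_num)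
      nlinarith
    calc ‖z₁ + (T ^ n₂) z₂ - v‖ = ‖z₁ + ((T ^ n₂) z₂ - v)‖ := by abel_nf
    _ ≤ ‖z₁‖ + ‖(T ^ n₂) z₂ - v‖ := norm_add_le _ _
    _ < ε / 4 + ε / (4 * C) := add_lt_add hz₁small hz₂close
    _ ≤ ε / 4 + ε / 4 := by linarith
    _ < ε := by linarith

lemma aux_birkhoff [CompleteSpace X] [TopologicalSpace.SeparableSpace X] (T : X →L[𝕜] X)
    (htrans : ∀ (u v : X) (ε : ℝ), 0 < ε →
      ∃ (w : X) (N : ℕ), ‖w - u‖ < ε ∧ ‖(T ^ N) w - v‖ < ε) :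
    ∃ x : X, Dense (Set.range fun n : ℕ => (T ^ n) x) := by
  haveI : Nonempty X := ⟨0⟩
  set y : ℕ → X := TopologicalSpace.denseSeq X with hy
  have hyd : DenseRange y := TopologicalSpace.denseRange_denseSeq X
  set G : ℕ × ℕ → Set X :=
    fun p => ⋃ n : ℕ, (T ^ n) ⁻¹' Metric.ball (y p.1) (1 / (p.2 + 1)) with hG
  have hopen : ∀ p, IsOpen (G p) := fun p =>
    isOpen_iUnion fun n => (T ^ n).continuous.isOpen_preimage _ Metric.isOpen_ball
  have hdense : ∀ p, Dense (G p) := by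
    intro p
    rw [Metric.dense_iff]
    intro u ε hε
    have hpos : (0 : ℝ) < min ε (1 / (p.2 + 1)) := by positivity
    obtain ⟨w, N, hw1, hw2⟩ := htrans u (y p.1) _ hpos
    refine ⟨w, ?_, ?_⟩
    · rw [Metric.mem_ball, dist_eq_norm]
      exact lt_of_lt_of_le hw1 (min_le_left _ _)
    · refine Set.mem_iUnion.mpr ⟨N, ?_⟩
      simp only [Set.mem_preimage, Metric.mem_ball, dist_eq_norm]
      exact lt_of_lt_of_le hw2 (min_le_right _ _)
  have hbig : Dense (⋂ p, G p) := dense_iInter_of_isOpen hopen hdense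
  obtain ⟨x, hx⟩ := hbig.nonempty
  refine ⟨x, Metric.dense_iff.mpr fun u ε hε => ?_⟩
  obtain ⟨yj, hyj⟩ := Metric.dense_iff.mp hyd u (ε / 2) (by positivity)
  obtain ⟨hyjb, j, rfl⟩ := hyj
  obtain ⟨k, hk⟩ := exists_nat_one_div_lt (show (0:ℝ) < ε / 2 by positivity)
  have hxk := Set.mem_iInter.mp hx (j, k)
  obtain ⟨n, hn⟩ := Set.mem_iUnion.mp hxk
  refine ⟨(T ^ n) x, ?_, ⟨n, rfl⟩⟩
  rw [Metric.mem_ball]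
  have h1 : dist ((T ^ n) x) (y j) < 1 / (k + 1) := Metric.mem_ball.mp hn
  have h2 : dist (y j) u < ε / 2 := Metric.mem_ball.mp hyjb
  calc dist ((T ^ n) x) u ≤ dist ((T ^ n) x) (y j) + dist (y j) u := dist_triangle _ _ _
  _ < 1 / (k + 1) + ε / 2 := add_lt_add h1 h2
  _ < ε / 2 + ε / 2 := by linarith
  _ = ε := by ring

end Aux

/-- Let `T` be a continuous linear operator on a separable Banach space `X` (over `ℝ` or
`ℂ`). If for every `x ∈ X` and every `ε > 0` there exist a periodic point `z` of `T` and
an integer `n ≥ 1` with `‖z‖ < ε` and `‖Tⁿz − x‖ < ε`, then `T` is chaotic: it is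
hypercyclic and its periodic points are dense. -/
theorem statement12 {𝕜 : Type*} [RCLike 𝕜] {X : Type*} [NormedAddCommGroup X]
    [NormedSpace 𝕜 X] [CompleteSpace X] [TopologicalSpace.SeparableSpace X]
    (T : X →L[𝕜] X)
    (h : ∀ (x : X) (ε : ℝ), 0 < ε →
      ∃ (z : X) (n : ℕ), 1 ≤ n ∧ (∃ m : ℕ, 1 ≤ m ∧ (T ^ m) z = z) ∧
        ‖z‖ < ε ∧ ‖(T ^ n) z - x‖ < ε) :
    (∃ x : X, Dense (Set.range fun n : ℕ => (T ^ n) x)) ∧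
    Dense {z : X | ∃ m : ℕ, 1 ≤ m ∧ (T ^ m) z = z} := by
  constructor
  · exact aux_birkhoff T (aux_trans T h)
  · rw [Metric.dense_iff]
    intro x ε hε
    obtain ⟨z, n, hn, ⟨m, hm, hz⟩, hzsmall, hzclose⟩ := h x ε hε
    refine ⟨(T ^ n) z, ?_, m, hm, ?_⟩
    · rw [Metric.mem_ball, dist_eq_norm]
      exact hzclose
    · rw [← ContinuousLinearMap.mul_apply, ← pow_add, add_comm m n, pow_add,
        ContinuousLinearMap.mul_apply, hz]
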